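/- Let D be the diamond graph with its two triangles T₁ and T₂, and let ζ be a gain function on D. Then (D,ζ) is a gain-line graph (with parameter s) if and only if ζ(T₁) = s or ζ(T₂) = s. -/

import Mathlib

open SimpleGraph

/-- `ψ` is a gain function on `Γ`: on adjacent ordered pairs, reversing the
orientation inverts the gain. -/
def IsGainFun {V G : Type} [Group G] (Γ : SimpleGraph V) (ψ : V → V → G) : Prop :=
  ∀ ⦃u v : V⦄, Γ.Adj u v → ψ v u = (ψ u v)⁻¹

/-- Two gain functions on `Γ` are switching equivalent. -/
def SwitchingEquiv {V G : Type} [Group G] (Γ : SimpleGraph V) (ψ₁ ψ₂ : V → V → G) : Prop :=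
  ∃ f : V → G, ∀ ⦃u v : V⦄, Γ.Adj u v → ψ₂ u v = (f u)⁻¹ * ψ₁ u v * f v

/-- A `G`-phase of `Γ`: a choice of a group element for every incident
(vertex, edge) pair (the non-incident entries of the phase matrix are `0`,
so they carry no data). -/
def GPhase {V : Type} (Γ : SimpleGraph V) (G : Type) : Type :=
  ∀ (v : V) (e : Γ.edgeSet), v ∈ (e : Sym2 V) → G

/-- `Ψ(H) = ψ`: the gain function associated with the phase `H` (with parameter `s₁`)
is `ψ`, i.e. `ψ(u,v) = s₁ · H(u,e) · H(v,e)⁻¹` for `e = {u,v}`. -/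
def PsiEq {V G : Type} [Group G] {Γ : SimpleGraph V} (s₁ : G) (H : GPhase Γ G)
    (ψ : V → V → G) : Prop :=
  ∀ ⦃u v : V⦄ (h : Γ.Adj u v),
    ψ u v = s₁ * H u ⟨s(u, v), h⟩ (Sym2.mem_mk_left u v)
      * (H v ⟨s(u, v), h⟩ (Sym2.mem_mk_right u v))⁻¹

/-- `Ψ_L(H) = ζ`: the gain function on the line graph associated with the phase `H`
(with parameter `s`) is `ζ`, i.e. `ζ(e_p,e_q) = s · H(w,e_p)⁻¹ · H(w,e_q)` whenever
`w` is a common endpoint of the distinct edges `e_p, e_q`. -/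
def PsiLEq {V G : Type} [Group G] {Γ : SimpleGraph V} (s : G) (H : GPhase Γ G)
    (ζ : Γ.edgeSet → Γ.edgeSet → G) : Prop :=
  ∀ (p q : Γ.edgeSet) (w : V) (hp : w ∈ (p : Sym2 V)) (hq : w ∈ (q : Sym2 V)), p ≠ q →
    ζ p q = s * (H w p hp)⁻¹ * H w q hq

/-- `(L, ζ)` is a gain-line graph (with parameter `s`): there are a graph `Γ`
with `L = L(Γ)` (up to isomorphism) and a `G`-phase `H` of `Γ` with `Ψ_L(H) = ζ`. -/
def IsGainLine {VL G : Type} [Group G] (s : G) (L : SimpleGraph VL) (ζ : VL → VL → G) : Prop :=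
  ∃ (V' : Type) (Γ : SimpleGraph V') (φ : L ≃g Γ.lineGraph) (H : GPhase Γ G),
    PsiLEq s H fun p q => ζ (φ.symm p) (φ.symm q)
/-- The diamond graph `D` (`K₄` minus one edge): the two triangles `T₁ = 0 1 2` and
`T₂ = 0 1 3` share the edge `{0, 1}`, and `2 ≁ 3`. -/
def diamondGraph : SimpleGraph (Fin 4) :=
  SimpleGraph.fromRel (fun u v =>
    (u = 0 ∧ v = 1) ∨ (u = 1 ∧ v = 2) ∨ (u = 0 ∧ v = 2) ∨ (u = 1 ∧ v = 3) ∨ (u = 0 ∧ v = 3))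

/- ### Auxiliary material -/

instance : DecidableRel diamondGraph.Adj :=
  fun u v => decidable_of_iff _ (SimpleGraph.fromRel_adj _ u v).symm

lemma three_mem {α : Type} {a b c : α} {z : Sym2 α} (ha : a ∈ z) (hb : b ∈ z) (hc : c ∈ z) :
    a = b ∨ a = c ∨ b = c := by
  induction z using Sym2.ind with
  | _ x y =>
    rw [Sym2.mem_iff] at ha hb hc
    rcases ha with rfl|rfl <;> rcases hb with rfl|rfl <;> rcases hc with rfl|rfl <;> tauto

lemma diamond_common {V' : Type} {Γ : SimpleGraph V'} (p0 p1 p2 p3 : Γ.edgeSet)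
    (h01 : Γ.lineGraph.Adj p0 p1) (h02 : Γ.lineGraph.Adj p0 p2) (h03 : Γ.lineGraph.Adj p0 p3)
    (h23 : ¬ Γ.lineGraph.Adj p2 p3) (hne23 : p2 ≠ p3) :
    (∃ w, w ∈ (p0 : Sym2 V') ∧ w ∈ (p1 : Sym2 V') ∧ w ∈ (p2 : Sym2 V')) ∨
    (∃ w, w ∈ (p0 : Sym2 V') ∧ w ∈ (p1 : Sym2 V') ∧ w ∈ (p3 : Sym2 V')) := by
  by_contra hcon
  push_neg at hcon
  obtain ⟨hc2, hc3⟩ := hcon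
  obtain ⟨-, w01, hw01a, hw01b⟩ := lineGraph_adj_iff_exists.1 h01
  obtain ⟨-, w02, hw02a, hw02b⟩ := lineGraph_adj_iff_exists.1 h02
  obtain ⟨-, w03, hw03a, hw03b⟩ := lineGraph_adj_iff_exists.1 h03
  have hdisj : ∀ v : V', v ∈ (p2 : Sym2 V') → v ∈ (p3 : Sym2 V') → False := by
    intro v hv2 hv3
    exact h23 (lineGraph_adj_iff_exists.2 ⟨hne23, v, hv2, hv3⟩)
  rcases three_mem hw01a hw02a hw03a with h | h | h
  · exact hc2 w01 hw01a hw01b (h ▸ hw02b)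
  · exact hc3 w01 hw01a hw01b (h ▸ hw03b)
  · exact hdisj w02 hw02b (h ▸ hw03b)

lemma odd_triangle {G : Type} [Group G] {V' : Type} {Γ : SimpleGraph V'} (s : G)
    (hs : s * s = 1) (hsc : ∀ g : G, s * g = g * s) (H : GPhase Γ G)
    (ζ' : Γ.edgeSet → Γ.edgeSet → G) (hH : PsiLEq s H ζ')
    (p q r : Γ.edgeSet) (hpq : p ≠ q) (hqr : q ≠ r) (hrp : r ≠ p)
    (w : V') (hp : w ∈ (p : Sym2 V')) (hq : w ∈ (q : Sym2 V')) (hr : w ∈ (r : Sym2 V')) :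
    ζ' p q * ζ' q r * ζ' r p = s := by
  rw [hH p q w hp hq hpq, hH q r w hq hr hqr, hH r p w hr hp hrp]
  have h1 : ∀ a b : G, a * (s * b) = s * (a * b) := fun a b => by
    rw [← mul_assoc, ← hsc, mul_assoc]
  simp only [mul_assoc, h1]
  simp [← mul_assoc, hs]

/-- The paw graph: a triangle `0 1 2` with the pendant edge `{0, 3}`. -/
def pawGraph : SimpleGraph (Fin 4) :=
  SimpleGraph.fromRel (fun u v =>
    (u = 0 ∧ v = 1) ∨ (u = 0 ∧ v = 2) ∨ (u = 1 ∧ v = 2) ∨ (u = 0 ∧ v = 3))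

instance : DecidableRel pawGraph.Adj :=
  fun u v => decidable_of_iff _ (SimpleGraph.fromRel_adj _ u v).symm

def eA : pawGraph.edgeSet := ⟨s(0,1), (SimpleGraph.mem_edgeSet pawGraph).2 (by decide)⟩
def eB : pawGraph.edgeSet := ⟨s(0,2), (SimpleGraph.mem_edgeSet pawGraph).2 (by decide)⟩
def eC : pawGraph.edgeSet := ⟨s(1,2), (SimpleGraph.mem_edgeSet pawGraph).2 (by decide)⟩
def eD : pawGraph.edgeSet := ⟨s(0,3), (SimpleGraph.mem_edgeSet pawGraph).2 (by decide)⟩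

lemma paw_edges (p : pawGraph.edgeSet) : p = eA ∨ p = eB ∨ p = eC ∨ p = eD := by
  obtain ⟨e, he⟩ := p
  have key : ∀ x y : Fin 4, pawGraph.Adj x y →
      (s(x,y) = s((0:Fin 4),(1:Fin 4)) ∨ s(x,y) = s((0:Fin 4),(2:Fin 4)) ∨
       s(x,y) = s((1:Fin 4),(2:Fin 4)) ∨ s(x,y) = s((0:Fin 4),(3:Fin 4))) := by decide
  induction e using Sym2.ind with
  | _ x y =>
    rw [SimpleGraph.mem_edgeSet pawGraph] at he
    rcases key x y he with h | h | h | h <;>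
      simp only [eA, eB, eC, eD, Subtype.mk.injEq] <;> tauto

def pawEquiv : Fin 4 ≃ pawGraph.edgeSet where
  toFun := ![eA, eB, eD, eC]
  invFun := fun p => if p = eA then 0 else if p = eB then 1 else if p = eD then 2 else 3
  left_inv := by intro i; fin_cases i <;> simp <;> decide
  right_inv := by
    intro p
    rcases paw_edges p with rfl | rfl | rfl | rfl <;> simp <;> decide

def pawIso : diamondGraph ≃g pawGraph.lineGraph where
  toEquiv := pawEquiv
  map_rel_iff' := by
    intro i j
    rw [SimpleGraph.lineGraph_adj_iff_exists]
    show _ ↔ diamondGraph.Adj i j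
    rw [diamondGraph, SimpleGraph.fromRel_adj]
    fin_cases i <;> fin_cases j <;> simp [pawEquiv] <;> decide

lemma pawIso_symm_eA : pawIso.symm eA = 0 := by decide
lemma pawIso_symm_eB : pawIso.symm eB = 1 := by decide
lemma pawIso_symm_eC : pawIso.symm eC = 3 := by decide
lemma pawIso_symm_eD : pawIso.symm eD = 2 := by decide

lemma construct {G : Type} [Group G] (s : G) (hs : s * s = 1) (hsc : ∀ g : G, s * g = g * s)
    (ζ : Fin 4 → Fin 4 → G) (hζ : IsGainFun diamondGraph ζ)
    (h : ζ 0 1 * ζ 1 2 * ζ 2 0 = s) : IsGainLine s diamondGraph ζ := by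
  have hs' : s⁻¹ = s := by
    rw [← mul_one s⁻¹, ← hs, ← mul_assoc, inv_mul_cancel, one_mul]
  have h10 : ζ 1 0 = (ζ 0 1)⁻¹ := hζ (by decide)
  have h20 : ζ 2 0 = (ζ 0 2)⁻¹ := hζ (by decide)
  have h21 : ζ 2 1 = (ζ 1 2)⁻¹ := hζ (by decide)
  have h30 : ζ 3 0 = (ζ 0 3)⁻¹ := hζ (by decide)
  have h31 : ζ 3 1 = (ζ 1 3)⁻¹ := hζ (by decide)
  -- ζ 1 2 = s * (ζ 0 1)⁻¹ * ζ 0 2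
  have h12 : ζ 1 2 = s * (ζ 0 1)⁻¹ * ζ 0 2 := by
    have := h
    rw [h20] at this
    calc ζ 1 2 = (ζ 0 1)⁻¹ * (ζ 0 1 * ζ 1 2 * (ζ 0 2)⁻¹) * ζ 0 2 := by group
    _ = (ζ 0 1)⁻¹ * s * ζ 0 2 := by rw [this]
    _ = s * (ζ 0 1)⁻¹ * ζ 0 2 := by rw [← hsc]
  refine ⟨Fin 4, pawGraph, pawIso, (fun v e _ =>
    if v = 0 then
      (if (e : Sym2 (Fin 4)) = s(0,2) then s * ζ 0 1
       else if (e : Sym2 (Fin 4)) = s(0,3) then s * ζ 0 2 else 1)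
    else if v = 1 then (if (e : Sym2 (Fin 4)) = s(1,2) then s * ζ 0 3 else 1)
    else if v = 2 then (if (e : Sym2 (Fin 4)) = s(1,2) then s * ζ 1 3 else 1)
    else 1), ?_⟩
  intro p q w hp hq hne
  have hmem : ∀ (x y : Fin 4) (e : pawGraph.edgeSet), (e : Sym2 (Fin 4)) = s(x,y) →
      w ∈ (e : Sym2 (Fin 4)) → w = x ∨ w = y := by
    intro x y e he hw
    rw [he, Sym2.mem_iff] at hw
    exact hw
  rcases paw_edges p with rfl | rfl | rfl | rfl <;>
    rcases paw_edges q with rfl | rfl | rfl | rfl <;>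
    first
    | exact absurd rfl hne
    | (rcases hmem _ _ _ rfl hp with rfl | rfl <;>
       first
        | exact absurd hq (by decide)
        | (simp only [pawIso_symm_eA, pawIso_symm_eB, pawIso_symm_eC, pawIso_symm_eD]
           simp (config := { decide := true }) only [eA, eB, eC, eD, Sym2.eq_iff, if_true, if_false]
           simp only [h10, h20, h21, h30, h31, h12, mul_inv_rev, inv_inv, inv_one,
             hs', mul_assoc, hsc, hs, mul_one, one_mul]))

def diamondSwap : diamondGraph ≃g diamondGraph where
  toEquiv := ⟨![0, 1, 3, 2], ![0, 1, 3, 2], by decide, by decide⟩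
  map_rel_iff' := by intro i j; fin_cases i <;> fin_cases j <;> decide

lemma transfer {G : Type} [Group G] (s : G) (ζ : Fin 4 → Fin 4 → G)
    (e : diamondGraph ≃g diamondGraph)
    (h : IsGainLine s diamondGraph (fun u v => ζ (e u) (e v))) :
    IsGainLine s diamondGraph ζ := by
  obtain ⟨V', Γ, φ, H, hH⟩ := h
  refine ⟨V', Γ, e.symm.trans φ, H, ?_⟩
  intro p q w hp hq hne
  have := hH p q w hp hq hne
  simpa using this

/-- `(D, ζ)` is a gain-line graph if and only if at least one of the two triangles of
the diamond has gain `s` (part of Eq. (3.3)). -/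
theorem diamondGraph_gainLine_iff
    {G : Type} [Group G] (s : G) (hs : s * s = 1) (hsc : ∀ g : G, s * g = g * s)
    (ζ : Fin 4 → Fin 4 → G) (hζ : IsGainFun diamondGraph ζ) :
    IsGainLine s diamondGraph ζ ↔
      (ζ 0 1 * ζ 1 2 * ζ 2 0 = s ∨ ζ 0 1 * ζ 1 3 * ζ 3 0 = s) := by
  constructor
  · rintro ⟨V', Γ, φ, H, hH⟩
    have hinj : Function.Injective φ := φ.toEquiv.injective
    have hne : ∀ i j : Fin 4, i ≠ j → φ i ≠ φ j := fun i j hij h => hij (hinj h)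
    have hadj : ∀ i j : Fin 4, diamondGraph.Adj i j → Γ.lineGraph.Adj (φ i) (φ j) := by
      intro i j hij; exact φ.map_adj_iff.2 hij
    have h23 : ¬ Γ.lineGraph.Adj (φ 2) (φ 3) := by
      intro hcon
      exact (by decide : ¬ diamondGraph.Adj 2 3) (φ.map_adj_iff.1 hcon)
    rcases diamond_common (φ 0) (φ 1) (φ 2) (φ 3)
        (hadj 0 1 (by decide)) (hadj 0 2 (by decide)) (hadj 0 3 (by decide)) h23
        (hne 2 3 (by decide)) with ⟨w, hw0, hw1, hw2⟩ | ⟨w, hw0, hw1, hw3⟩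
    · left
      have := odd_triangle s hs hsc H _ hH (φ 0) (φ 1) (φ 2)
        (hne 0 1 (by decide)) (hne 1 2 (by decide)) (hne 2 0 (by decide)) w hw0 hw1 hw2
      simpa using this
    · right
      have := odd_triangle s hs hsc H _ hH (φ 0) (φ 1) (φ 3)
        (hne 0 1 (by decide)) (hne 1 3 (by decide)) (hne 3 0 (by decide)) w hw0 hw1 hw3
      simpa using this
  · rintro (h | h)
    · exact construct s hs hsc ζ hζ h
    · refine transfer s ζ diamondSwap (construct s hs hsc _ ?_ ?_)
      · intro u v huv
        exact hζ (diamondSwap.map_adj_iff.2 huv : diamondGraph.Adj _ _)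
      · simpa [show diamondSwap 0 = 0 from by decide, show diamondSwap 1 = 1 from by decide,
          show diamondSwap 2 = 3 from by decide] using h
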